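/- arXiv:1407.4084 — 3 statements merged into one kernel-verified Lean document; each statement's English description precedes it below -/
import Mathlib

section
/- Let u be C¹ on [0,1] with u(0) = u(1) = 1, let -1 ≤ b < 3, and let 0 ≤ β ≤ 1. Then ∫₀¹ (p(x) + β p'(x)) · ((b/2)u(x)² + ((3-b)/2)u'(x)²) dx ≥ δ_b, where p(x) = cosh(x-1/2)/(2 sinh(1/2)), p'(x) = sinh(x-1/2)/(2 sinh(1/2)), and δ_b = (√(3-b)/4)(√(3(1+b)) - √(3-b)). -/
open Real Set intervalIntegral

noncomputable def p (x : ℝ) : ℝ := Real.cosh (x - 1/2) / (2 * Real.sinh (1/2))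

noncomputable def p' (x : ℝ) : ℝ := Real.sinh (x - 1/2) / (2 * Real.sinh (1/2))

noncomputable def delta (b : ℝ) : ℝ :=
  Real.sqrt (3 - b) / 4 * (Real.sqrt (3 * (1 + b)) - Real.sqrt (3 - b))

lemma sinh_half_pos : 0 < Real.sinh (1/2) := Real.sinh_pos_iff.mpr (by norm_num)

lemma delta_eq (b : ℝ) (hb : -1 ≤ b) (hb3 : b < 3) :
    (delta b)^2 = (3 - b)/2 * (b/2 - delta b) := by
  unfold delta
  have hs : Real.sqrt (3 - b) ^ 2 = 3 - b := Real.sq_sqrt (by linarith)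
  have ht : Real.sqrt (3 * (1 + b)) ^ 2 = 3 * (1 + b) := Real.sq_sqrt (by linarith)
  set s := Real.sqrt (3 - b)
  set t := Real.sqrt (3 * (1 + b))
  have h1 : s^2 * t^2 = (3-b) * (3*(1+b)) := by rw [hs, ht]
  have h2 : s^2 * s^2 = (3-b) * (3-b) := by rw [hs]
  have h3 : s^2 * (s*t) = (3-b) * (s*t) := by rw [hs]
  nlinarith [h1, h2, h3, hs, ht]

lemma w_pos (x β : ℝ) (hβ0 : 0 ≤ β) (hβ1 : β ≤ 1) : 0 < p x + β * p' x := by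
  have hsh := sinh_half_pos
  have e : p x + β * p' x
      = (Real.cosh (x-1/2) + β * Real.sinh (x-1/2)) / (2 * Real.sinh (1/2)) := by
    unfold p p'; ring
  rw [e]
  apply div_pos _ (by linarith)
  set t := x - 1/2
  nlinarith [Real.cosh_pos t, Real.cosh_sq t, sq_nonneg (Real.sinh t),
    sq_nonneg (Real.cosh t + β * Real.sinh t), sq_nonneg (Real.cosh t - Real.sinh t),
    sq_nonneg (Real.cosh t + Real.sinh t)]

lemma w'_sq_le (x β : ℝ) (hβ0 : 0 ≤ β) (hβ1 : β ≤ 1) :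
    (p' x + β * p x)^2 ≤ (p x + β * p' x)^2 := by
  have hsh := sinh_half_pos
  have e1 : p' x + β * p x
      = (Real.sinh (x-1/2) + β * Real.cosh (x-1/2)) / (2 * Real.sinh (1/2)) := by
    unfold p p'; ring
  have e2 : p x + β * p' x
      = (Real.cosh (x-1/2) + β * Real.sinh (x-1/2)) / (2 * Real.sinh (1/2)) := by
    unfold p p'; ring
  rw [e1, e2, div_pow, div_pow, div_le_div_iff_of_pos_right (by positivity)]
  set t := x - 1/2
  nlinarith [Real.cosh_sq t, sq_nonneg (1 - β), mul_nonneg hβ0 hβ0]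

lemma hasDerivAt_p (x : ℝ) : HasDerivAt p (p' x) x := by
  have h : HasDerivAt (fun y : ℝ => y - 1/2) 1 x := (hasDerivAt_id x).sub_const _
  have H := (h.cosh).div_const (2 * Real.sinh (1/2))
  simp only [mul_one] at H
  exact H

lemma hasDerivAt_p' (x : ℝ) : HasDerivAt p' (p x) x := by
  have h : HasDerivAt (fun y : ℝ => y - 1/2) 1 x := (hasDerivAt_id x).sub_const _
  have H := (h.sinh).div_const (2 * Real.sinh (1/2))
  simp only [mul_one] at H
  exact H

lemma continuous_p : Continuous p := by
  unfold p; fun_prop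

lemma continuous_p' : Continuous p' := by
  unfold p'; fun_prop

/-- For `u` C¹ on `[0,1]` with `u(0)=u(1)=1`, `-1 ≤ b < 3` and `0 ≤ β ≤ 1`,
`∫₀¹ (p + β p')((b/2)u² + ((3-b)/2)u'²) ≥ δ_b`. -/
theorem stmt12 (u : ℝ → ℝ) (b β : ℝ)
    (hu : ContDiffOn ℝ 1 u (Set.Icc 0 1))
    (h0 : u 0 = 1) (h1 : u 1 = 1)
    (hb : -1 ≤ b) (hb3 : b < 3) (hβ0 : 0 ≤ β) (hβ1 : β ≤ 1) :
    (∫ x in (0:ℝ)..1,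
        (p x + β * p' x) *
          (b/2 * u x^2 + (3 - b)/2 * (derivWithin u (Set.Icc 0 1) x)^2)) ≥
      delta b := by
  set v : ℝ → ℝ := derivWithin u (Set.Icc 0 1) with hv
  have hud : UniqueDiffOn ℝ (Set.Icc (0:ℝ) 1) := uniqueDiffOn_Icc (by norm_num)
  have hvcont : ContinuousOn v (Set.Icc 0 1) :=
    hu.continuousOn_derivWithin hud le_rfl
  have hucont : ContinuousOn u (Set.Icc 0 1) := hu.continuousOn
  -- the integrand and the comparison function
  set f : ℝ → ℝ := fun x => (p x + β * p' x) * (b/2 * u x^2 + (3 - b)/2 * v x^2) with hf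
  set g : ℝ → ℝ := fun x =>
    delta b * ((p x + β * p' x) * u x^2 + (p' x + β * p x) * (2 * u x * v x)) with hg
  set G : ℝ → ℝ := fun x => delta b * ((p' x + β * p x) * u x ^ 2) with hG
  have hfc : ContinuousOn f (Set.Icc 0 1) := by
    apply ContinuousOn.mul
    · exact (continuous_p.continuousOn.add (continuousOn_const.mul continuous_p'.continuousOn))
    · exact ((continuousOn_const.mul (hucont.pow 2)).add
        (continuousOn_const.mul (hvcont.pow 2)))
  have hgc : ContinuousOn g (Set.Icc 0 1) := by
    apply continuousOn_const.mul
    apply ContinuousOn.add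
    · exact (continuous_p.continuousOn.add (continuousOn_const.mul continuous_p'.continuousOn)).mul
        (hucont.pow 2)
    · exact (continuous_p'.continuousOn.add (continuousOn_const.mul continuous_p.continuousOn)).mul
        ((continuousOn_const.mul hucont).mul hvcont)
  have hfi : IntervalIntegrable f MeasureTheory.volume 0 1 :=
    hfc.intervalIntegrable_of_Icc (by norm_num)
  have hgi : IntervalIntegrable g MeasureTheory.volume 0 1 :=
    hgc.intervalIntegrable_of_Icc (by norm_num)
  -- FTC: ∫ g = G 1 - G 0 = delta b
  have hGc : ContinuousOn G (Set.Icc 0 1) := by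
    apply continuousOn_const.mul
    exact (continuous_p'.continuousOn.add (continuousOn_const.mul continuous_p.continuousOn)).mul
      (hucont.pow 2)
  have hGderiv : ∀ x ∈ Set.Ioo (0:ℝ) 1, HasDerivWithinAt G (g x) (Set.Ioi x) x := by
    intro x hx
    have hxI : x ∈ Set.Icc (0:ℝ) 1 := Set.Ioo_subset_Icc_self hx
    have hux : HasDerivAt u (v x) x :=
      ((hu.differentiableOn one_ne_zero x hxI).hasDerivWithinAt).hasDerivAt
        (Icc_mem_nhds hx.1 hx.2)
    have hpw : HasDerivAt (fun y => p' y + β * p y) (p x + β * p' x) x :=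
      (hasDerivAt_p' x).add ((hasDerivAt_p x).const_mul β)
    have hu2 : HasDerivAt (fun y => u y ^ 2) (2 * u x * v x) x := by
      have := hux.fun_pow 2
      simpa [mul_comm, mul_assoc, mul_left_comm] using this
    have := ((hpw.fun_mul hu2).const_mul (delta b))
    refine (HasDerivAt.hasDerivWithinAt ?_)
    convert this using 1
  have hFTC : ∫ x in (0:ℝ)..1, g x = G 1 - G 0 :=
    intervalIntegral.integral_eq_sub_of_hasDeriv_right_of_le (by norm_num) hGc hGderiv hgi
  have hGval : G 1 - G 0 = delta b := by
    have hsh := sinh_half_pos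
    simp only [hG, h0, h1, p, p']
    have h1' : (1:ℝ) - 1/2 = 1/2 := by norm_num
    have h0' : (0:ℝ) - 1/2 = -(1/2) := by norm_num
    rw [h1', h0', Real.sinh_neg, Real.cosh_neg]
    field_simp
    ring
  -- pointwise comparison
  have hpt : ∀ x ∈ Set.Icc (0:ℝ) 1, g x ≤ f x := by
    intro x _
    have hW : 0 < p x + β * p' x := w_pos x β hβ0 hβ1
    have hWs : (p' x + β * p x)^2 ≤ (p x + β * p' x)^2 := w'_sq_le x β hβ0 hβ1
    have hD : (delta b)^2 = (3 - b)/2 * (b/2 - delta b) := delta_eq b hb hb3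
    simp only [hf, hg]
    set D := delta b with hDdef
    set W := p x + β * p' x with hWdef
    set W' := p' x + β * p x with hW'def
    set U := u x with hUdef
    set V := v x with hVdef
    clear_value D W W' U V
    have hgW : 0 < (3-b)/2 * W := mul_pos (by linarith) hW
    have hX : D^2 * (W*U)^2 = (3-b)/2 * (b/2 - D) * (W*U)^2 := by rw [hD]
    nlinarith [sq_nonneg ((3-b)/2 * W * V - D * W' * U), hX, hgW,
      mul_nonneg (mul_nonneg (sq_nonneg D) (sub_nonneg.mpr hWs)) (sq_nonneg U)]
  have hmono : ∫ x in (0:ℝ)..1, g x ≤ ∫ x in (0:ℝ)..1, f x :=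
    intervalIntegral.integral_mono_on (by norm_num) hgi hfi hpt
  calc delta b = G 1 - G 0 := hGval.symm
    _ = ∫ x in (0:ℝ)..1, g x := hFTC.symm
    _ ≤ ∫ x in (0:ℝ)..1, f x := hmono
end

section
/- Blow-up ODE lemma: Let 0 < T* ≤ ∞ and let f, g ∈ C¹([0,T*), ℝ) be such that for some constant c > 0 and all t ∈ [0,T*): f'(t) ≥ c f(t) g(t) and g'(t) ≥ c f(t) g(t). If f(0) > 0 and g(0) > 0, then T* ≤ 1/(c √(f(0) g(0))). -/
open Real

/-- Blow-up ODE lemma: if `f' ≥ c f g`, `g' ≥ c f g` on `[0,T*)` with `f(0), g(0) > 0`,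
then `T* ≤ 1/(c √(f(0)g(0)))` (where `0 < T* ≤ ∞`). -/
theorem stmt14 (T : EReal) (hT : 0 < T) (c : ℝ) (hc : 0 < c)
    (f g f' g' : ℝ → ℝ)
    (hf : ∀ t : ℝ, 0 ≤ t → (t : EReal) < T → HasDerivAt f (f' t) t)
    (hg : ∀ t : ℝ, 0 ≤ t → (t : EReal) < T → HasDerivAt g (g' t) t)
    (hf'c : ContinuousOn f' {t : ℝ | 0 ≤ t ∧ (t : EReal) < T})
    (hg'c : ContinuousOn g' {t : ℝ | 0 ≤ t ∧ (t : EReal) < T})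
    (hfineq : ∀ t : ℝ, 0 ≤ t → (t : EReal) < T → f' t ≥ c * f t * g t)
    (hgineq : ∀ t : ℝ, 0 ≤ t → (t : EReal) < T → g' t ≥ c * f t * g t)
    (hf0 : 0 < f 0) (hg0 : 0 < g 0) :
    T ≤ ((1 / (c * Real.sqrt (f 0 * g 0)) : ℝ) : EReal) := by
  set b : ℝ := 1 / (c * Real.sqrt (f 0 * g 0)) with hb
  by_contra hcon
  push_neg at hcon
  obtain ⟨t, hbt, htT⟩ := EReal.exists_between_coe_real hcon
  rw [EReal.coe_lt_coe_iff] at hbt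
  have hfg0 : 0 < f 0 * g 0 := mul_pos hf0 hg0
  have hsq0 : 0 < Real.sqrt (f 0 * g 0) := Real.sqrt_pos.mpr hfg0
  have hbpos : 0 < b := by rw [hb]; positivity
  have ht0 : 0 ≤ t := le_of_lt (hbpos.trans hbt)
  have hmem : ∀ s ∈ Set.Icc (0:ℝ) t, 0 ≤ s ∧ (s:EReal) < T := fun s hs =>
    ⟨hs.1, lt_of_le_of_lt (EReal.coe_le_coe_iff.mpr hs.2) htT⟩
  have hfc : ContinuousOn f (Set.Icc 0 t) := fun s hs =>
    ((hf s (hmem s hs).1 (hmem s hs).2).continuousAt).continuousWithinAt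
  have hgc : ContinuousOn g (Set.Icc 0 t) := fun s hs =>
    ((hg s (hmem s hs).1 (hmem s hs).2).continuousAt).continuousWithinAt
  -- positivity of f and g on [0, t]
  have pos : ∀ s ∈ Set.Icc (0:ℝ) t, 0 < f s ∧ 0 < g s := by
    by_contra hneg
    push_neg at hneg
    obtain ⟨s₀, hs₀Icc, hs₀⟩ := hneg
    set B : Set ℝ := {s | s ∈ Set.Icc (0:ℝ) t ∧ (f s ≤ 0 ∨ g s ≤ 0)} with hBdef
    have hBne : B.Nonempty := by
      refine ⟨s₀, hs₀Icc, ?_⟩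
      rcases le_or_gt (f s₀) 0 with h | h
      · exact Or.inl h
      · exact Or.inr (hs₀ h)
    have hBbdd : BddBelow B := ⟨0, fun s hs => hs.1.1⟩
    have hBclosed : IsClosed B := by
      have h1 := hfc.preimage_isClosed_of_isClosed isClosed_Icc (isClosed_Iic (a := (0:ℝ)))
      have h2 := hgc.preimage_isClosed_of_isClosed isClosed_Icc (isClosed_Iic (a := (0:ℝ)))
      have hBeq : B = (Set.Icc 0 t ∩ f ⁻¹' Set.Iic 0) ∪ (Set.Icc 0 t ∩ g ⁻¹' Set.Iic 0) := by
        ext s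
        simp only [hBdef, Set.mem_setOf_eq, Set.mem_union, Set.mem_inter_iff,
          Set.mem_preimage, Set.mem_Iic]
        tauto
      rw [hBeq]; exact h1.union h2
    set t₀ : ℝ := sInf B with ht₀def
    have ht₀B : t₀ ∈ B := hBclosed.csInf_mem hBne hBbdd
    have ht₀Icc : t₀ ∈ Set.Icc (0:ℝ) t := ht₀B.1
    have ht₀pos : 0 < t₀ := by
      rcases lt_or_eq_of_le ht₀Icc.1 with h | h
      · exact h
      · exfalso
        rcases ht₀B.2 with h' | h' <;> rw [← h] at h' <;> linarith
    have posBelow : ∀ s ∈ Set.Ico (0:ℝ) t₀, 0 < f s ∧ 0 < g s := by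
      intro s hs
      have hsnB : s ∉ B := fun hmem => absurd (csInf_le hBbdd hmem) (not_le.mpr hs.2)
      have hsIcc : s ∈ Set.Icc (0:ℝ) t := ⟨hs.1, le_trans hs.2.le ht₀Icc.2⟩
      by_contra hcon'
      apply hsnB
      refine ⟨hsIcc, ?_⟩
      rw [not_and_or] at hcon'
      rcases hcon' with h | h
      · exact Or.inl (not_lt.mp h)
      · exact Or.inr (not_lt.mp h)
    have hsub : Set.Icc (0:ℝ) t₀ ⊆ Set.Icc (0:ℝ) t :=
      Set.Icc_subset_Icc_right ht₀Icc.2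
    have hmono : ∀ (F F' : ℝ → ℝ),
        (∀ s : ℝ, 0 ≤ s → (s:EReal) < T → HasDerivAt F (F' s) s) →
        (∀ s : ℝ, 0 ≤ s → (s:EReal) < T → F' s ≥ c * f s * g s) →
        MonotoneOn F (Set.Icc 0 t₀) := by
      intro F F' hF hFineq
      apply monotoneOn_of_deriv_nonneg (convex_Icc 0 t₀)
      · intro s hs
        have h := hmem s (hsub hs)
        exact (hF s h.1 h.2).continuousAt.continuousWithinAt
      · intro s hs
        rw [interior_Icc] at hs
        have h := hmem s (hsub ⟨hs.1.le, hs.2.le⟩)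
        exact (hF s h.1 h.2).differentiableAt.differentiableWithinAt
      · intro s hs
        rw [interior_Icc] at hs
        have h := hmem s (hsub ⟨hs.1.le, hs.2.le⟩)
        rw [(hF s h.1 h.2).deriv]
        have hp := posBelow s ⟨hs.1.le, hs.2⟩
        have : 0 ≤ c * f s * g s := mul_nonneg (mul_nonneg hc.le hp.1.le) hp.2.le
        linarith [hFineq s h.1 h.2]
    have hfmono := hmono f f' hf hfineq
    have hgmono := hmono g g' hg hgineq
    have h1 : f 0 ≤ f t₀ := hfmono (Set.left_mem_Icc.mpr ht₀pos.le)
      (Set.right_mem_Icc.mpr ht₀pos.le) ht₀pos.le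
    have h2 : g 0 ≤ g t₀ := hgmono (Set.left_mem_Icc.mpr ht₀pos.le)
      (Set.right_mem_Icc.mpr ht₀pos.le) ht₀pos.le
    rcases ht₀B.2 with h | h <;> linarith
  -- now the quantitative blow-up argument
  set φ : ℝ → ℝ := fun s => (Real.sqrt (f s * g s))⁻¹ with hφdef
  set ψ : ℝ → ℝ := fun s => φ s + c * s with hψdef
  set D : ℝ → ℝ := fun s =>
    -(1 / (2 * Real.sqrt (f s * g s)) * (f' s * g s + f s * g' s)) /
      Real.sqrt (f s * g s) ^ 2 + c with hDdef
  have Hpos : ∀ s ∈ Set.Icc (0:ℝ) t, 0 < f s * g s := fun s hs =>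
    mul_pos (pos s hs).1 (pos s hs).2
  have hψderiv : ∀ s ∈ Set.Icc (0:ℝ) t, HasDerivAt ψ (D s) s := by
    intro s hs
    have h := hmem s hs
    have h1 : HasDerivAt (fun y => f y * g y) (f' s * g s + f s * g' s) s :=
      (hf s h.1 h.2).mul (hg s h.1 h.2)
    have hne : Real.sqrt (f s * g s) ≠ 0 := ne_of_gt (Real.sqrt_pos.mpr (Hpos s hs))
    have h2 := (Real.hasDerivAt_sqrt (ne_of_gt (Hpos s hs))).comp s h1
    have h3 := h2.inv hne
    have h4 := h3.add ((hasDerivAt_id s).const_mul c)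
    have : HasDerivAt ψ
        (-(1 / (2 * Real.sqrt (f s * g s)) * (f' s * g s + f s * g' s)) /
          Real.sqrt (f s * g s) ^ 2 + c * 1) s := h4
    simpa [hDdef, mul_one] using this
  have hanti : AntitoneOn ψ (Set.Icc 0 t) := by
    apply antitoneOn_of_deriv_nonpos (convex_Icc 0 t)
    · intro s hs
      exact (hψderiv s hs).continuousAt.continuousWithinAt
    · intro s hs
      rw [interior_Icc] at hs
      exact (hψderiv s ⟨hs.1.le, hs.2.le⟩).differentiableAt.differentiableWithinAt
    · intro s hs
      rw [interior_Icc] at hs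
      have hsIcc : s ∈ Set.Icc (0:ℝ) t := ⟨hs.1.le, hs.2.le⟩
      rw [(hψderiv s hsIcc).deriv]
      have h := hmem s hsIcc
      have hfp := (pos s hsIcc).1
      have hgp := (pos s hsIcc).2
      set r := Real.sqrt (f s * g s) with hrdef
      have hr : 0 < r := Real.sqrt_pos.mpr (Hpos s hsIcc)
      have hr2 : r ^ 2 = f s * g s := Real.sq_sqrt (Hpos s hsIcc).le
      -- AM-GM : f + g ≥ 2 r
      have hamgm : 2 * r ≤ f s + g s := by
        have ha : Real.sqrt (f s) ^ 2 = f s := Real.sq_sqrt hfp.le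
        have hbq : Real.sqrt (g s) ^ 2 = g s := Real.sq_sqrt hgp.le
        have hmul : r = Real.sqrt (f s) * Real.sqrt (g s) := by
          rw [hrdef, Real.sqrt_mul hfp.le]
        nlinarith [sq_nonneg (Real.sqrt (f s) - Real.sqrt (g s))]
      have hH' : 2 * c * (f s * g s) * r ≤ f' s * g s + f s * g' s := by
        have h1 := hfineq s h.1 h.2
        have h2 := hgineq s h.1 h.2
        nlinarith [mul_le_mul_of_nonneg_right h1 hgp.le,
          mul_le_mul_of_nonneg_left h2 hfp.le,
          mul_le_mul_of_nonneg_left hamgm (mul_nonneg (mul_nonneg hc.le hfp.le) hgp.le)]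
      have key : c ≤ 1 / (2 * r) * (f' s * g s + f s * g' s) / r ^ 2 := by
        rw [le_div_iff₀ (by positivity), one_div, inv_mul_eq_div,
          le_div_iff₀ (by positivity)]
        have heq : c * r ^ 2 * (2 * r) = 2 * c * (f s * g s) * r := by rw [hr2]; ring
        linarith [hH']
      have hneg := neg_div (r ^ 2) (1 / (2 * r) * (f' s * g s + f s * g' s))
      simp only [hDdef]
      rw [← hrdef]
      linarith [key, hneg.le]
  have hψt : ψ t ≤ ψ 0 := hanti (Set.left_mem_Icc.mpr ht0) (Set.right_mem_Icc.mpr ht0) ht0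
  have hφt : 0 < φ t := by
    simp only [hφdef]
    exact inv_pos.mpr (Real.sqrt_pos.mpr (Hpos t (Set.right_mem_Icc.mpr ht0)))
  have hcb : c * b = (Real.sqrt (f 0 * g 0))⁻¹ := by
    rw [hb]; field_simp
  have hct : c * b < c * t := mul_lt_mul_of_pos_left hbt hc
  have hψ0 : ψ 0 = (Real.sqrt (f 0 * g 0))⁻¹ := by simp [hψdef, hφdef]
  have hψteq : ψ t = φ t + c * t := rfl
  rw [hψ0, hψteq] at hψt
  linarith
end

section
/- For b ∈ (1,3], the only value of b for which there exists β ∈ [0,1] with β² + (2/(b-1))(δ_b - b/2) ≥ 0 is b = 2, in which case β = 1 works (since δ_2 = 1/2 gives 1 + (2/1)(1/2 - 1) = 0). Equivalently, for b ∈ (1,3] one has (2/(b-1))(b/2 - δ_b) ≤ 1 if and only if b = 2, where δ_b = (√(3-b)/4)(√(3(1+b)) - √(3-b)). -/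
open Real

/-- For `b ∈ (1,3]`, `(2/(b-1))(b/2 - δ_b) ≤ 1` iff `b = 2`. -/
theorem stmt16 (b : ℝ) (hb : 1 < b) (hb3 : b ≤ 3) :
    (2 / (b - 1)) * (b / 2 - delta b) ≤ 1 ↔ b = 2 := by
  have hb1 : 0 < b - 1 := by linarith
  have hu : (0:ℝ) ≤ 3 - b := by linarith
  have hv : (0:ℝ) ≤ 3 * (1 + b) := by linarith
  have h5 : (0:ℝ) ≤ 5 - b := by linarith
  have hms : Real.sqrt (3 - b) * Real.sqrt (3 - b) = 3 - b := Real.mul_self_sqrt hu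
  have hs : Real.sqrt (3 - b) * Real.sqrt (3 * (1 + b))
      = Real.sqrt ((3 - b) * (3 * (1 + b))) := (Real.sqrt_mul hu _).symm
  have hδval : delta b = (Real.sqrt ((3 - b) * (3 * (1 + b))) - (3 - b)) / 4 := by
    rw [delta, ← hs]
    linear_combination (-(1:ℝ)/4) * hms
  have key : Real.sqrt ((3 - b) * (3 * (1 + b))) ≤ 5 - b := by
    rw [show (5:ℝ) - b = Real.sqrt ((5 - b) ^ 2) from (Real.sqrt_sq h5).symm]
    apply Real.sqrt_le_sqrt
    nlinarith [sq_nonneg (b - 2)]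
  constructor
  · intro h
    rw [div_mul_eq_mul_div, div_le_one hb1] at h
    -- h : 2 * (b / 2 - delta b) ≤ b - 1, so delta b ≥ 1/2
    have hδ2 : delta b ≤ 1 / 2 := by rw [hδval]; linarith
    have heq : Real.sqrt ((3 - b) * (3 * (1 + b))) = 5 - b := by
      rw [hδval] at h; linarith
    have hsq : (3 - b) * (3 * (1 + b)) = (5 - b) ^ 2 := by
      rw [← heq, Real.sq_sqrt (by positivity : (0:ℝ) ≤ (3 - b) * (3 * (1 + b)))]
    have : (b - 2) ^ 2 = 0 := by nlinarith
    have := pow_eq_zero_iff (n := 2) (by norm_num) |>.mp this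
    linarith
  · intro h
    subst h
    have h1 : Real.sqrt ((3 - (2:ℝ)) * (3 * (1 + 2))) = 3 := by
      rw [show ((3:ℝ) - 2) * (3 * (1 + 2)) = 3 ^ 2 by norm_num]
      exact Real.sqrt_sq (by norm_num)
    rw [hδval, h1]
    norm_num
end
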